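/- Let q ≥ 1 and k ≥ 2 be integers and let α_1, …, α_q be probability vectors, α_t = (α_{t,1}, …, α_{t,k}) with 0 < α_{t,j} < 1 and α_{t,1} + ⋯ + α_{t,k} = 1. There exists a constant C > 0, depending only on k, q and the α_t, such that for all integers n ≥ 2, all integers d ≥ 1, all integers g_1, …, g_{k−1}, and all integers 0 ≤ i_1, …, i_q ≤ n with i_1 + ⋯ + i_q = n, one has | L − 1/d^{k−1} | ≤ C·(log n)/√n, where L = ∑ ∏_{t=1}^q ( i_t! / (s_{t,1}! ⋯ s_{t,k}!) ) α_{t,1}^{s_{t,1}} ⋯ α_{t,k}^{s_{t,k}}, the sum being over all tuples of nonnegative integers (s_{t,1}, …, s_{t,k}) for 1 ≤ t ≤ q satisfying s_{t,1} + ⋯ + s_{t,k} = i_t for every t and satisfying the congruences s^{(a)} ≡ g_a (mod d) for a = 1, …, k − 1, where s^{(a)} := s_{1,a} + ⋯ + s_{q,a}. -/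

import Mathlib

open scoped Classical



noncomputable def ec (x : ℝ) : ℂ := Complex.exp (2 * Real.pi * x * Complex.I)

lemma ec_zero : ec 0 = 1 := by simp [ec]

lemma ec_add (x y : ℝ) : ec (x + y) = ec x * ec y := by
  rw [ec, ec, ec, ← Complex.exp_add]; push_cast; ring_nf

lemma ec_int (n : ℤ) : ec n = 1 := by
  rw [ec]
  have := Complex.exp_int_mul_two_pi_mul_I n
  rw [← this]; congr 1; push_cast; ring

lemma ec_nat_mul (n : ℕ) (x : ℝ) : ec (n * x) = ec x ^ n := by
  rw [ec, ec, ← Complex.exp_nat_mul]; congr 1; push_cast; ring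

lemma abs_ec (x : ℝ) : norm (ec x) = 1 := by
  rw [ec, Complex.norm_exp]
  simp [Complex.add_re, Complex.mul_re]

lemma ec_eq_one_iff_int {x : ℝ} : ec x = 1 ↔ ∃ n : ℤ, x = n := by
  rw [ec, Complex.exp_eq_one_iff]
  constructor
  · rintro ⟨n, hn⟩
    refine ⟨n, ?_⟩
    have hπ : (2 * Real.pi : ℂ) * Complex.I ≠ 0 := by
      have h1 : (Real.pi : ℂ) ≠ 0 := by exact_mod_cast Real.pi_ne_zero
      simp [Complex.I_ne_zero, h1]
    have : (x : ℂ) = n := by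
      have h2 : (x : ℂ) * (2 * Real.pi * Complex.I) = (n : ℂ) * (2 * Real.pi * Complex.I) := by
        linear_combination hn
      exact mul_right_cancel₀ hπ h2
    exact_mod_cast this
  · rintro ⟨n, rfl⟩
    exact ⟨n, by push_cast; ring⟩

lemma ortho (d : ℕ) (hd : 1 ≤ d) (x : ℤ) :
    ∑ r ∈ Finset.range d, ec (r * x / d) = if (d : ℤ) ∣ x then (d : ℂ) else 0 := by
  have hd0 : (d : ℝ) ≠ 0 := by positivity
  have hstep : ∀ r : ℕ, ec (r * x / d) = ec (x / d) ^ r := by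
    intro r
    rw [← ec_nat_mul]; congr 1; ring
  simp_rw [hstep]
  by_cases hdvd : (d : ℤ) ∣ x
  · rw [if_pos hdvd]
    obtain ⟨c, hc⟩ := hdvd
    have h1 : ec ((x:ℝ) / (d:ℝ)) = 1 := by
      have h2 : ((x : ℤ) : ℝ) / d = ((c : ℤ) : ℝ) := by rw [hc]; push_cast; field_simp
      rw [h2, ec_int]
    simp [h1]
  · have hne : ec (x / d) ≠ 1 := by
      intro h
      obtain ⟨n, hn⟩ := ec_eq_one_iff_int.1 h
      apply hdvd
      refine ⟨n, ?_⟩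
      have : (x : ℝ) = d * n := by field_simp at hn; linarith [hn]
      exact_mod_cast this
    have hpow : ec (x / d) ^ d = 1 := by
      rw [← ec_nat_mul]
      have : (d : ℝ) * (x / d) = (x : ℤ) := by field_simp
      rw [this, ec_int]
    rw [geom_sum_eq hne, hpow]
    simp [hdvd]



open scoped Classical

lemma ec_sum {ι : Type*} (s : Finset ι) (f : ι → ℝ) :
    ec (∑ i ∈ s, f i) = ∏ i ∈ s, ec (f i) := by
  classical
  induction s using Finset.induction with
  | empty => simp [ec_zero]
  | @insert _ _ h ih => rw [Finset.sum_insert h, Finset.prod_insert h, ec_add, ih]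

def rr {m : ℕ} (r : Fin m → ℕ) (j : Fin (m+1)) : ℕ :=
  if h : (j : ℕ) < m then r ⟨j, h⟩ else 0

lemma rr_castSucc {m : ℕ} (r : Fin m → ℕ) (a : Fin m) : rr r a.castSucc = r a := by
  rw [rr, dif_pos (by simpa using a.isLt)]
  congr 1

lemma rr_last {m : ℕ} (r : Fin m → ℕ) : rr r (Fin.last m) = 0 := by
  rw [rr, dif_neg (by simp)]

lemma indicator_eq (d : ℕ) (hd : 1 ≤ d) (x g : ℤ) :
    (if x ≡ g [ZMOD (d:ℤ)] then (1:ℂ) else 0)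
      = (∑ r ∈ Finset.range d, ec ((r : ℝ) * ((x - g : ℤ) : ℝ) / d)) / d := by
  have hdC : (d:ℂ) ≠ 0 := by
    exact_mod_cast Nat.cast_ne_zero.mpr (by omega)
  rw [ortho d hd (x - g)]
  have hiff : x ≡ g [ZMOD (d:ℤ)] ↔ (d:ℤ) ∣ (x - g) := by
    rw [Int.modEq_iff_dvd, dvd_sub_comm]
  by_cases h : x ≡ g [ZMOD (d:ℤ)]
  · rw [if_pos h, if_pos (hiff.mp h), div_self hdC]
  · rw [if_neg h, if_neg (fun hc => h (hiff.mpr hc)), zero_div]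

theorem main_identity (q m : ℕ) (d : ℕ) (hd : 1 ≤ d)
    (α : Fin q → Fin (m+1) → ℝ) (g : Fin m → ℤ) (idx : Fin q → ℕ) :
    (∑ s ∈ (Fintype.piFinset (fun t : Fin q =>
          Finset.piAntidiag (Finset.univ : Finset (Fin (m+1))) (idx t))).filter
        (fun s => ∀ a : Fin m, ((∑ t, s t a.castSucc : ℕ) : ℤ) ≡ g a [ZMOD (d:ℤ)]),
        ∏ t, ((Nat.multinomial Finset.univ (s t) : ℂ) * ∏ j, (α t j : ℂ) ^ s t j))
    = (1/(d:ℂ)^m) * ∑ r ∈ Fintype.piFinset (fun _ : Fin m => Finset.range d),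
        (∏ a, ec (-(((r a : ℕ) : ℝ) * (g a : ℝ)) / d)) *
        ∏ t, (∑ j, (α t j : ℂ) * ec (((rr r j : ℕ) : ℝ)/d)) ^ idx t := by
  have hd0 : (d:ℝ) ≠ 0 := by positivity
  -- Step 1: open up the filter as indicator product
  rw [Finset.sum_filter]
  have step1 : ∀ s : Fin q → Fin (m+1) → ℕ,
      (if (∀ a : Fin m, ((∑ t, s t a.castSucc : ℕ) : ℤ) ≡ g a [ZMOD (d:ℤ)])
        then (∏ t, ((Nat.multinomial Finset.univ (s t) : ℂ) * ∏ j, (α t j : ℂ) ^ s t j))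
        else 0)
      = (∏ t, ((Nat.multinomial Finset.univ (s t) : ℂ) * ∏ j, (α t j : ℂ) ^ s t j))
          * ∏ a : Fin m,
            ((∑ r ∈ Finset.range d,
              ec ((r : ℝ) * ((((∑ t, s t a.castSucc : ℕ) : ℤ) - g a : ℤ) : ℝ) / d)) / d) := by
    intro s
    have : ∀ a : Fin m, ((∑ r ∈ Finset.range d,
              ec ((r : ℝ) * ((((∑ t, s t a.castSucc : ℕ) : ℤ) - g a : ℤ) : ℝ) / d)) / d)
        = (if ((∑ t, s t a.castSucc : ℕ) : ℤ) ≡ g a [ZMOD (d:ℤ)] then (1:ℂ) else 0) :=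
      fun a => (indicator_eq d hd _ _).symm
    simp_rw [this]
    rw [Finset.prod_boole]
    simp only [Finset.mem_univ, forall_true_left]
    split
    · rw [mul_one]
    · rw [mul_zero]
  simp_rw [step1]
  -- Step 2: expand the product of character sums
  have step2 : ∀ s : Fin q → Fin (m+1) → ℕ,
      (∏ a : Fin m, ((∑ r ∈ Finset.range d,
          ec ((r : ℝ) * ((((∑ t, s t a.castSucc : ℕ) : ℤ) - g a : ℤ) : ℝ) / d)) / d))
      = (1/(d:ℂ)^m) * ∑ r ∈ Fintype.piFinset (fun _ : Fin m => Finset.range d),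
          ∏ a : Fin m,
            ec (((r a : ℕ) : ℝ) * ((((∑ t, s t a.castSucc : ℕ) : ℤ) - g a : ℤ) : ℝ) / d) := by
    intro s
    rw [Finset.prod_div_distrib, Finset.prod_const, Finset.prod_univ_sum]
    rw [Finset.card_univ, Fintype.card_fin]
    rw [div_eq_mul_inv, one_div, mul_comm]
  simp_rw [step2]
  -- Step 3: swap sums and match term by term
  rw [Finset.mul_sum]
  simp_rw [Finset.mul_sum]
  rw [Finset.sum_comm]
  refine Finset.sum_congr rfl fun r _ => ?_
  -- per fixed character r
  have keyfact : ∀ s : Fin q → Fin (m+1) → ℕ,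
      (∏ t, ((Nat.multinomial Finset.univ (s t) : ℂ) * ∏ j, (α t j : ℂ) ^ s t j))
        * ∏ a : Fin m,
            ec (((r a : ℕ) : ℝ) * ((((∑ t, s t a.castSucc : ℕ) : ℤ) - g a : ℤ) : ℝ) / d)
      = (∏ a, ec (-(((r a : ℕ) : ℝ) * (g a : ℝ)) / d)) *
          ∏ t, ((Nat.multinomial Finset.univ (s t) : ℂ)
            * ∏ j, ((α t j : ℂ) * ec (((rr r j : ℕ) : ℝ)/d)) ^ s t j) := by
    intro s
    have hchar : ∀ a : Fin m,
        ec (((r a : ℕ) : ℝ) * ((((∑ t, s t a.castSucc : ℕ) : ℤ) - g a : ℤ) : ℝ) / d)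
        = ec (-(((r a : ℕ) : ℝ) * (g a : ℝ)) / d)
            * ∏ t, ec (((r a : ℕ) : ℝ) * ((s t a.castSucc : ℕ) : ℝ) / d) := by
      intro a
      rw [← ec_sum, ← ec_add]
      congr 1
      push_cast
      rw [← Finset.sum_div, ← Finset.mul_sum]
      ring
    have hprodj : ∀ t : Fin q,
        ∏ a : Fin m, ec (((r a : ℕ) : ℝ) * ((s t a.castSucc : ℕ) : ℝ) / d)
          = ∏ j : Fin (m+1), ec (((rr r j : ℕ) : ℝ) / d) ^ (s t j) := by
      intro t
      rw [Fin.prod_univ_castSucc (f := fun j => ec (((rr r j : ℕ) : ℝ) / d) ^ (s t j))]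
      rw [rr_last]
      simp only [Nat.cast_zero, zero_div, ec_zero, one_pow, mul_one]
      refine Finset.prod_congr rfl fun a _ => ?_
      rw [rr_castSucc, ← ec_nat_mul]
      congr 1
      ring
    have e0 : ∏ a : Fin m,
        ec (((r a : ℕ) : ℝ) * ((((∑ t, s t a.castSucc : ℕ) : ℤ) - g a : ℤ) : ℝ) / d)
        = (∏ a, ec (-(((r a : ℕ) : ℝ) * (g a : ℝ)) / d))
            * ∏ t, ∏ j : Fin (m+1), ec (((rr r j : ℕ) : ℝ) / d) ^ (s t j) := by
      simp_rw [hchar]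
      rw [Finset.prod_mul_distrib]
      congr 1
      rw [Finset.prod_comm]
      exact Finset.prod_congr rfl fun t _ => hprodj t
    rw [e0]
    simp_rw [mul_pow, Finset.prod_mul_distrib]
    ring
  calc ∑ s ∈ Fintype.piFinset (fun t : Fin q =>
          Finset.piAntidiag (Finset.univ : Finset (Fin (m+1))) (idx t)),
        (∏ t, ((Nat.multinomial Finset.univ (s t) : ℂ) * ∏ j, (α t j : ℂ) ^ s t j))
          * ((1/(d:ℂ)^m) * ∏ a : Fin m,
            ec (((r a : ℕ) : ℝ) * ((((∑ t, s t a.castSucc : ℕ) : ℤ) - g a : ℤ) : ℝ) / d))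
      = (1/(d:ℂ)^m) * ∑ s ∈ Fintype.piFinset (fun t : Fin q =>
          Finset.piAntidiag (Finset.univ : Finset (Fin (m+1))) (idx t)),
        (∏ t, ((Nat.multinomial Finset.univ (s t) : ℂ) * ∏ j, (α t j : ℂ) ^ s t j))
          * ∏ a : Fin m,
            ec (((r a : ℕ) : ℝ) * ((((∑ t, s t a.castSucc : ℕ) : ℤ) - g a : ℤ) : ℝ) / d) := by
        rw [Finset.mul_sum]
        refine Finset.sum_congr rfl fun s _ => ?_
        ring
    _ = (1/(d:ℂ)^m) * ((∏ a, ec (-(((r a : ℕ) : ℝ) * (g a : ℝ)) / d)) *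
          ∏ t, (∑ j, (α t j : ℂ) * ec (((rr r j : ℕ) : ℝ)/d)) ^ idx t) := by
        congr 1
        simp_rw [keyfact]
        rw [← Finset.mul_sum]
        congr 1
        rw [← Finset.prod_univ_sum
          (t := fun t : Fin q => Finset.piAntidiag (Finset.univ : Finset (Fin (m+1))) (idx t))
          (f := fun (t : Fin q) (v : Fin (m+1) → ℕ) =>
            (Nat.multinomial Finset.univ v : ℂ)
              * ∏ j, ((α t j : ℂ) * ec (((rr r j : ℕ) : ℝ)/d)) ^ v j)]
        refine Finset.prod_congr rfl fun t _ => ?_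
        exact (Finset.sum_pow_eq_sum_piAntidiag _ _ _).symm



lemma jordan_sq {x : ℝ} (hx0 : 0 ≤ x) (hx1 : x < 1) :
    8 * (min x (1 - x)) ^ 2 ≤ 1 - Real.cos (2 * Real.pi * x) := by
  have hπ := Real.pi_pos
  have hcos : Real.cos (2 * Real.pi * x) = 1 - 2 * Real.sin (Real.pi * x) ^ 2 := by
    have h1 := Real.cos_two_mul (Real.pi * x)
    have h2 := Real.sin_sq_add_cos_sq (Real.pi * x)
    have : 2 * Real.pi * x = 2 * (Real.pi * x) := by ring
    rw [this, h1]; nlinarith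
  have hsin : 2 * min x (1 - x) ≤ Real.sin (Real.pi * x) := by
    rcases le_total x (1/2) with h | h
    · have := Real.mul_le_sin (x := Real.pi * x) (by positivity) (by nlinarith)
      calc 2 * min x (1 - x) ≤ 2 * x := by
            have : min x (1-x) ≤ x := min_le_left _ _
            linarith
        _ = 2 / Real.pi * (Real.pi * x) := by field_simp
        _ ≤ Real.sin (Real.pi * x) := this
    · have h2 : Real.sin (Real.pi * x) = Real.sin (Real.pi * (1 - x)) := by
        rw [show Real.pi * (1 - x) = Real.pi - Real.pi * x by ring, Real.sin_pi_sub]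
      have := Real.mul_le_sin (x := Real.pi * (1 - x)) (by nlinarith) (by nlinarith)
      calc 2 * min x (1 - x) ≤ 2 * (1 - x) := by
            have : min x (1-x) ≤ 1 - x := min_le_right _ _
            linarith
        _ = 2 / Real.pi * (Real.pi * (1 - x)) := by field_simp
        _ ≤ Real.sin (Real.pi * x) := by rw [h2]; exact this
  have hmin0 : 0 ≤ min x (1 - x) := le_min hx0 (by linarith)
  nlinarith [sq_nonneg (Real.sin (Real.pi * x) - 2 * min x (1-x))]

lemma cast_min_sub (d r : ℕ) (hr : r < d) :
    ((min r (d - r) : ℕ) : ℝ) / d = min ((r:ℝ)/d) (1 - (r:ℝ)/d) := by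
  have hd0 : (0:ℝ) < d := by exact_mod_cast Nat.pos_of_ne_zero (by omega)
  have hcast : ((d - r : ℕ) : ℝ) = (d:ℝ) - r := by
    rw [Nat.cast_sub (le_of_lt hr)]
  rw [Nat.cast_min, hcast, ← min_div_div_right (le_of_lt hd0)]
  congr 1
  field_simp

-- key one-character bound
lemma char_bound (d r : ℕ) (hd : 1 ≤ d) (hr : r < d) :
    8 * (((min r (d - r) : ℕ) : ℝ) / d) ^ 2
      ≤ 1 - Real.cos (2 * Real.pi * ((r:ℝ) / d)) := by
  have hd0 : (0:ℝ) < d := by exact_mod_cast hd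
  rw [cast_min_sub d r hr]
  exact jordan_sq (by positivity) (by rw [div_lt_one hd0]; exact_mod_cast hr)

-- norm bound for convex combination on circle
lemma combo_bound {k : ℕ} (α : Fin k → ℝ) (hα0 : ∀ j, 0 < α j) (hsum : ∑ j, α j = 1)
    (z : Fin k → ℂ) (hz : ∀ j, norm (z j) = 1)
    (j0 jl : Fin k) (hne : j0 ≠ jl) (hzl : z jl = 1) :
    norm (∑ j, (α j : ℂ) * z j) ≤ 1 - α j0 * α jl * (1 - (z j0).re) := by
  classical
  set A := α j0 with hA
  set B := α jl with hB
  have hA0 : 0 < A := hα0 j0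
  have hB0 : 0 < B := hα0 jl
  set u : ℝ := 1 - (z j0).re with hu
  have hre : |(z j0).re| ≤ 1 := by
    rw [← hz j0]; exact Complex.abs_re_le_norm _
  have hu0 : 0 ≤ u := by rw [hu]; cases abs_le.mp hre; linarith
  have hu2 : u ≤ 2 := by rw [hu]; cases abs_le.mp hre; linarith
  have hAB1 : A + B ≤ 1 := by
    rw [← hsum]
    have : A + B = ∑ j ∈ ({j0, jl} : Finset (Fin k)), α j := by
      rw [Finset.sum_pair hne]
    rw [this]
    exact Finset.sum_le_sum_of_subset_of_nonneg (Finset.subset_univ _)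
      (fun j _ _ => (hα0 j).le)
  have hsub : ({j0, jl} : Finset (Fin k)) ⊆ Finset.univ := Finset.subset_univ _
  have hsplit : (∑ j, (α j : ℂ) * z j)
      = (∑ j ∈ Finset.univ \ {j0, jl}, (α j : ℂ) * z j) + ((A:ℂ) * z j0 + (B:ℂ) * z jl) := by
    rw [← Finset.sum_pair hne (f := fun j => (α j : ℂ) * z j), Finset.sum_sdiff hsub]
  -- norm of the pair part
  have hnormsq : Complex.normSq ((A:ℂ) * z j0 + (B:ℂ)) = (A + B)^2 - 2*A*B*u := by
    have h1 : Complex.normSq (z j0) = 1 := by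
      rw [← Complex.sq_norm, hz j0]; norm_num
    rw [Complex.normSq_apply] at h1 ⊢
    simp only [Complex.add_re, Complex.add_im, Complex.mul_re, Complex.mul_im,
      Complex.ofReal_re, Complex.ofReal_im, Complex.one_re, Complex.one_im]
    rw [hu]
    linear_combination (A*A) * h1
  have hpair : norm ((A:ℂ) * z j0 + (B:ℂ)) ≤ (A + B) - A*B*u := by
    have hA1 : A ≤ 1 := by linarith
    have hB1 : B ≤ 1 := by linarith
    have hc0 : 0 ≤ (A + B) - A*B*u := by
      nlinarith [mul_nonneg (sub_nonneg.mpr hu2) (mul_nonneg hA0.le hB0.le),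
        mul_nonneg hA0.le (sub_nonneg.mpr hB1), mul_nonneg hB0.le (sub_nonneg.mpr hA1)]
    rw [Complex.norm_def]
    rw [show (A + B) - A*B*u = Real.sqrt (((A+B) - A*B*u)^2) by rw [Real.sqrt_sq hc0]]
    apply Real.sqrt_le_sqrt
    rw [hnormsq]
    nlinarith [mul_nonneg (mul_nonneg (mul_nonneg hA0.le hB0.le) hu0) (sub_nonneg.mpr hAB1),
      sq_nonneg (A*B*u)]
  calc norm (∑ j, (α j : ℂ) * z j)
      ≤ norm (∑ j ∈ Finset.univ \ {j0, jl}, (α j : ℂ) * z j)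
        + norm ((A:ℂ) * z j0 + (B:ℂ) * z jl) := by
        rw [hsplit]; exact norm_add_le _ _
    _ ≤ (∑ j ∈ Finset.univ \ {j0, jl}, α j) + ((A + B) - A*B*u) := by
        apply add_le_add
        · refine le_trans (norm_sum_le _ _) ?_
          apply le_of_eq
          apply Finset.sum_congr rfl
          intro j _
          rw [norm_mul, Complex.norm_real, Real.norm_eq_abs, hz j, mul_one, abs_of_pos (hα0 j)]
        · rw [hzl, mul_one]; exact hpair
    _ = 1 - A*B*u := by
        have : (∑ j ∈ Finset.univ \ {j0, jl}, α j) = 1 - (A + B) := by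
          have := Finset.sum_sdiff hsub (f := α)
          rw [Finset.sum_pair hne] at this
          rw [← hsum]; linarith
        rw [this]; ring
    _ ≤ 1 - α j0 * α jl * (1 - (z j0).re) := by rw [hu]



lemma geom_tail_le {q : ℝ} (hq0 : 0 < q) (hq1 : q < 1) (d : ℕ) :
    ∑ u ∈ Finset.Ico 1 d, q ^ u ≤ q / (1 - q) := by
  have h1q : 0 < 1 - q := by linarith
  have h2 : ∑ u ∈ Finset.Ico 1 d, q ^ u = q * ∑ i ∈ Finset.range (d - 1), q ^ i := by
    rw [Finset.sum_Ico_eq_sum_range, Finset.mul_sum]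
    apply Finset.sum_congr rfl
    intro i _
    rw [← pow_succ']
    ring_nf
  rw [h2, div_eq_mul_inv]
  apply mul_le_mul_of_nonneg_left _ hq0.le
  have h3 : ∑ i ∈ Finset.range (d-1), q ^ i = (1 - q ^ (d-1)) / (1 - q) := by
    rw [geom_sum_eq (by linarith : q ≠ 1)]
    rw [div_eq_div_iff (by linarith) (by linarith)]
    ring
  rw [h3, inv_eq_one_div]
  gcongr
  nlinarith [pow_nonneg hq0.le (d-1)]

lemma exp_ratio_le {y : ℝ} (hy : 0 < y) : Real.exp (-y) / (1 - Real.exp (-y)) ≤ 1 / y := by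
  have he1 : Real.exp (-y) < 1 := Real.exp_lt_one_iff.mpr (by linarith)
  have he0 : 0 < Real.exp (-y) := Real.exp_pos _
  rw [div_le_div_iff₀ (by linarith) hy]
  have h := Real.add_one_le_exp y
  have hprod : Real.exp (-y) * Real.exp y = 1 := by
    rw [← Real.exp_add]; simp
  nlinarith

lemma gauss_sum (d : ℕ) (hd : 1 ≤ d) (β : ℝ) (hβ : 0 < β) :
    ∑ r ∈ Finset.range d, Real.exp (-(β * (((min r (d - r) : ℕ) : ℝ) / d) ^ 2))
      ≤ 1 + 4 * (d : ℝ) / Real.sqrt β := by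
  have hd0 : (0:ℝ) < d := by exact_mod_cast hd
  have hsβ : 0 < Real.sqrt β := Real.sqrt_pos.mpr hβ
  have hsβsq : Real.sqrt β * Real.sqrt β = β := Real.mul_self_sqrt hβ.le
  set γ : ℝ := β / (d:ℝ)^2 with hγ
  have hγ0 : 0 < γ := by positivity
  set r0 : ℕ := Nat.floor ((d:ℝ) / Real.sqrt β) + 1 with hr0
  have hr0pos : (0:ℝ) < (r0:ℝ) := by
    have h1 : 0 < r0 := by omega
    exact_mod_cast h1
  have hfloor : ((d:ℝ) / Real.sqrt β) ≤ (r0:ℝ) := by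
    rw [hr0]
    push_cast
    exact (Nat.lt_floor_add_one _).le
  set qq : ℝ := Real.exp (-(γ * r0)) with hqq
  have hq0 : 0 < qq := Real.exp_pos _
  have hq1 : qq < 1 := by
    rw [hqq]
    apply Real.exp_lt_one_iff.mpr
    have : 0 < γ * r0 := by positivity
    linarith
  -- the symmetric tail T
  set T : ℝ := ∑ u ∈ Finset.Ico 1 d, Real.exp (-(γ * (u:ℝ)^2)) with hT
  have hTbound : T ≤ 2 * (d:ℝ) / Real.sqrt β := by
    have hterm : ∀ u ∈ Finset.Ico 1 d,
        Real.exp (-(γ * (u:ℝ)^2)) ≤ (if u < r0 then (1:ℝ) else 0) + qq ^ u := by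
      intro u hu
      by_cases h : u < r0
      · rw [if_pos h]
        have h1 : Real.exp (-(γ * (u:ℝ)^2)) ≤ 1 := by
          apply Real.exp_le_one_iff.mpr
          have : 0 ≤ γ * (u:ℝ)^2 := by positivity
          linarith
        have h2 : 0 ≤ qq ^ u := by positivity
        linarith
      · rw [if_neg h]
        push_neg at h
        have hru : (r0:ℝ) ≤ (u:ℝ) := by exact_mod_cast h
        have hu1 : (1:ℝ) ≤ (u:ℝ) := by
          have := (Finset.mem_Ico.mp hu).1
          exact_mod_cast this
        have hq : qq ^ u = Real.exp (-(γ * r0) * u) := by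
          rw [hqq, ← Real.exp_nat_mul]
          congr 1
          ring
        rw [hq]
        simp only [zero_add]
        apply Real.exp_le_exp.mpr
        have : γ * (r0:ℝ) * (u:ℝ) ≤ γ * (u:ℝ)^2 := by
          have : (r0:ℝ) * (u:ℝ) ≤ (u:ℝ) * (u:ℝ) := by nlinarith
          nlinarith
        linarith
    calc T ≤ ∑ u ∈ Finset.Ico 1 d, ((if u < r0 then (1:ℝ) else 0) + qq ^ u) :=
          Finset.sum_le_sum hterm
      _ = (∑ u ∈ Finset.Ico 1 d, (if u < r0 then (1:ℝ) else 0))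
            + ∑ u ∈ Finset.Ico 1 d, qq ^ u := Finset.sum_add_distrib
      _ ≤ (d:ℝ) / Real.sqrt β + (d:ℝ) / Real.sqrt β := by
          apply add_le_add
          · rw [Finset.sum_boole]
            have hcard : (Finset.filter (fun u => u < r0) (Finset.Ico 1 d)).card
                ≤ (Finset.Ico 1 r0).card := by
              apply Finset.card_le_card
              intro u hu
              simp only [Finset.mem_filter, Finset.mem_Ico] at hu ⊢
              omega
            have : ((Finset.filter (fun u => u < r0) (Finset.Ico 1 d)).card : ℝ)
                ≤ ((r0 - 1 : ℕ) : ℝ) := by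
              rw [← Nat.card_Ico 1 r0]
              exact_mod_cast hcard
            refine le_trans this ?_
            have : ((r0 - 1 : ℕ) : ℝ) = (Nat.floor ((d:ℝ) / Real.sqrt β) : ℝ) := by
              rw [hr0]; push_cast [Nat.add_sub_cancel]; ring
            rw [this]
            exact Nat.floor_le (by positivity)
          · refine le_trans (geom_tail_le hq0 hq1 d) ?_
            refine le_trans (exp_ratio_le (y := γ * r0) (by positivity) |>.trans_eq' ?_) ?_
            · rw [hqq]
            · have h1 : Real.sqrt β / (d:ℝ) ≤ γ * r0 := by
                have : γ * ((d:ℝ) / Real.sqrt β) ≤ γ * r0 :=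
                  mul_le_mul_of_nonneg_left hfloor hγ0.le
                refine le_trans (le_of_eq ?_) this
                rw [hγ]
                field_simp
                nlinarith
              have h2 : (0:ℝ) < Real.sqrt β / d := by positivity
              calc 1 / (γ * r0) ≤ 1 / (Real.sqrt β / (d:ℝ)) := by
                    apply one_div_le_one_div_of_le h2 h1
                _ = (d:ℝ) / Real.sqrt β := by field_simp
      _ = 2 * (d:ℝ) / Real.sqrt β := by ring

  -- symmetrization
  have hsym : ∑ r ∈ Finset.Ico 1 d, Real.exp (-(β * (((min r (d - r) : ℕ) : ℝ) / d) ^ 2))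
      ≤ 2 * T := by
    have hstep : ∀ r ∈ Finset.Ico 1 d,
        Real.exp (-(β * (((min r (d - r) : ℕ) : ℝ) / d) ^ 2))
          ≤ Real.exp (-(γ * (r:ℝ)^2)) + Real.exp (-(γ * ((d - r : ℕ):ℝ)^2)) := by
      intro r hr
      have key : ∀ u : ℕ, β * (((u:ℕ):ℝ)/d)^2 = γ * (u:ℝ)^2 := by
        intro u
        rw [hγ]
        field_simp
      rcases min_choice r (d - r) with h | h
      · rw [h, key r]
        have : 0 ≤ Real.exp (-(γ * ((d - r : ℕ):ℝ)^2)) := Real.exp_pos _ |>.le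
        linarith
      · rw [h, key (d - r)]
        have : 0 ≤ Real.exp (-(γ * (r:ℝ)^2)) := Real.exp_pos _ |>.le
        linarith
    calc ∑ r ∈ Finset.Ico 1 d, Real.exp (-(β * (((min r (d - r) : ℕ) : ℝ) / d) ^ 2))
        ≤ ∑ r ∈ Finset.Ico 1 d,
            (Real.exp (-(γ * (r:ℝ)^2)) + Real.exp (-(γ * ((d - r : ℕ):ℝ)^2))) :=
          Finset.sum_le_sum hstep
      _ = T + ∑ r ∈ Finset.Ico 1 d, Real.exp (-(γ * ((d - r : ℕ):ℝ)^2)) := by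
          rw [Finset.sum_add_distrib]
      _ = T + T := by
          congr 1
          rw [hT]
          refine Finset.sum_bij' (fun r _ => d - r) (fun r _ => d - r) ?_ ?_ ?_ ?_ ?_ <;>
            (intro r hr; simp only [Finset.mem_Ico] at hr ⊢) <;>
            first
            | rfl
            | omega
      _ = 2 * T := by ring
  -- putting together
  have hins : Finset.range d = insert 0 (Finset.Ico 1 d) := by
    ext r
    simp only [Finset.mem_range, Finset.mem_insert, Finset.mem_Ico]
    omega
  rw [hins, Finset.sum_insert (by simp)]
  have h00 : Real.exp (-(β * (((min 0 (d - 0) : ℕ) : ℝ) / d) ^ 2)) = 1 := by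
    norm_num
  rw [h00]
  have : 2 * T ≤ 2 * (2 * (d:ℝ) / Real.sqrt β) := by linarith
  have hfinal := le_trans hsym this
  calc 1 + ∑ r ∈ Finset.Ico 1 d, Real.exp (-(β * (((min r (d-r) : ℕ) : ℝ) / d) ^ 2))
      ≤ 1 + 2 * (2 * (d:ℝ) / Real.sqrt β) := by linarith
    _ = 1 + 4 * (d:ℝ) / Real.sqrt β := by ring


lemma re_ec (x : ℝ) : (ec x).re = Real.cos (2 * Real.pi * x) := by
  rw [ec]
  have : (2 * (Real.pi:ℂ) * (x:ℂ) * Complex.I) = ((2 * Real.pi * x : ℝ) : ℂ) * Complex.I := by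
    push_cast; ring
  rw [this, Complex.exp_ofReal_mul_I_re]

set_option maxHeartbeats 1600000 in
theorem statement7 (q k : ℕ) (hq : 1 ≤ q) (hk : 2 ≤ k)
    (α : Fin q → Fin k → ℝ)
    (hα0 : ∀ t j, 0 < α t j) (hα1 : ∀ t j, α t j < 1)
    (hαsum : ∀ t, ∑ j, α t j = 1) :
    ∃ C : ℝ, 0 < C ∧ ∀ n : ℕ, 2 ≤ n → ∀ d : ℕ, 1 ≤ d →
      ∀ g : Fin (k - 1) → ℤ, ∀ idx : Fin q → ℕ,
        (∀ t, idx t ≤ n) → (∑ t, idx t = n) →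
        |(∑ s ∈ (Fintype.piFinset (fun t : Fin q =>
              Fintype.piFinset (fun _ : Fin k => Finset.range (idx t + 1)))).filter
                (fun s => (∀ t, ∑ j, s t j = idx t) ∧
                  ∀ a : Fin (k - 1),
                    ((∑ t, s t (Fin.castLE (Nat.sub_le k 1) a) : ℕ) : ℤ) ≡ g a [ZMOD (d : ℤ)]),
            ∏ t, (Nat.multinomial Finset.univ (s t) : ℝ) * ∏ j, α t j ^ s t j)
          - 1 / (d : ℝ) ^ (k - 1)|
        ≤ C * Real.log n / Real.sqrt n := by
  obtain ⟨m, rfl⟩ : ∃ m, k = m + 1 := ⟨k - 1, by omega⟩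
  have hm : 1 ≤ m := by omega
  have hFq : Nonempty (Fin q) := ⟨⟨0, hq⟩⟩
  -- minimal probability
  set amin : ℝ := (Finset.univ : Finset (Fin q × Fin (m+1))).inf'
      (Finset.univ_nonempty) (fun p => α p.1 p.2) with hamin
  have hamin0 : 0 < amin := by
    rw [hamin, Finset.lt_inf'_iff]
    exact fun p _ => hα0 p.1 p.2
  have haminle : ∀ t j, amin ≤ α t j := fun t j =>
    Finset.inf'_le _ (Finset.mem_univ (t, j))
  set c : ℝ := 8 * amin^2 with hc
  have hc0 : 0 < c := by positivity
  set K : ℝ := 4 * m * Real.sqrt ((m:ℝ) / c) with hK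
  have hK0 : 0 ≤ K := by positivity
  have hlog2 : 0 < Real.log 2 := Real.log_pos (by norm_num)
  refine ⟨(K + 1) / Real.log 2, by positivity, ?_⟩
  intro n hn d hd g idx hidx hsumidx
  have hn0 : (0:ℝ) < n := by positivity
  have hd0 : (0:ℝ) < d := by exact_mod_cast hd
  set β : ℝ := c * n / m with hβdef
  have hβ : 0 < β := by
    have : (0:ℝ) < m := by exact_mod_cast hm
    positivity
  -- the real sum in question
  set L : ℝ := ∑ s ∈ (Fintype.piFinset (fun t : Fin q =>
        Fintype.piFinset (fun _ : Fin (m+1) => Finset.range (idx t + 1)))).filter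
          (fun s => (∀ t, ∑ j, s t j = idx t) ∧
            ∀ a : Fin (m + 1 - 1),
              ((∑ t, s t (Fin.castLE (Nat.sub_le (m+1) 1) a) : ℕ) : ℤ) ≡ g a [ZMOD (d : ℤ)]),
      ∏ t, (Nat.multinomial Finset.univ (s t) : ℝ) * ∏ j, α t j ^ s t j with hLdef
  show |L - 1 / (d:ℝ)^(m+1-1)| ≤ (K+1)/Real.log 2 * Real.log n / Real.sqrt n
  -- set conversion
  have hsetconv : (Fintype.piFinset (fun t : Fin q =>
        Fintype.piFinset (fun _ : Fin (m+1) => Finset.range (idx t + 1)))).filter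
          (fun s => (∀ t, ∑ j, s t j = idx t) ∧
            ∀ a : Fin (m + 1 - 1),
              ((∑ t, s t (Fin.castLE (Nat.sub_le (m+1) 1) a) : ℕ) : ℤ) ≡ g a [ZMOD (d : ℤ)])
      = (Fintype.piFinset (fun t : Fin q =>
          Finset.piAntidiag (Finset.univ : Finset (Fin (m+1))) (idx t))).filter
          (fun s => ∀ a : Fin m,
              ((∑ t, s t a.castSucc : ℕ) : ℤ) ≡ g a [ZMOD (d : ℤ)]) := by
    ext s
    simp only [Finset.mem_filter, Fintype.mem_piFinset, Finset.mem_piAntidiag,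
      Finset.mem_range, Nat.lt_succ_iff]
    constructor
    · rintro ⟨h1, h2, h3⟩
      exact ⟨fun t => ⟨h2 t, fun j _ => Finset.mem_univ j⟩, fun a => h3 a⟩
    · rintro ⟨h1, h2⟩
      refine ⟨fun t j => ?_, fun t => (h1 t).1, fun a => h2 a⟩
      calc s t j ≤ ∑ j', s t j' :=
            Finset.single_le_sum (fun i _ => Nat.zero_le _) (Finset.mem_univ j)
        _ = idx t := (h1 t).1
  -- the complex identity
  have hLC : (L : ℂ) = (1/(d:ℂ)^m) * ∑ r ∈ Fintype.piFinset (fun _ : Fin m => Finset.range d),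
      (∏ a, ec (-(((r a : ℕ) : ℝ) * (g a : ℝ)) / d)) *
      ∏ t, (∑ j, (α t j : ℂ) * ec (((rr r j : ℕ) : ℝ)/d)) ^ idx t := by
    rw [hLdef, hsetconv]
    simp only [Complex.ofReal_sum, Complex.ofReal_prod, Complex.ofReal_mul,
      Complex.ofReal_pow, Complex.ofReal_natCast]
    exact main_identity q m d hd α (fun a => g a) idx
  set R : Finset (Fin m → ℕ) := Fintype.piFinset (fun _ : Fin m => Finset.range d) with hR
  set Φ : (Fin m → ℕ) → ℂ := fun r =>
      (∏ a, ec (-(((r a : ℕ) : ℝ) * (g a : ℝ)) / d)) *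
      ∏ t, (∑ j, (α t j : ℂ) * ec (((rr r j : ℕ) : ℝ)/d)) ^ idx t with hΦ
  have hzeromem : (fun _ => 0 : Fin m → ℕ) ∈ R := by
    rw [hR]
    simp only [Fintype.mem_piFinset, Finset.mem_range]
    intro a
    omega
  have hrrzero : ∀ j : Fin (m+1), rr (fun _ => 0 : Fin m → ℕ) j = 0 := by
    intro j
    rw [rr]
    split <;> rfl
  have hΦzero : Φ (fun _ => 0) = 1 := by
    rw [hΦ]
    simp only [hrrzero, Nat.cast_zero, zero_mul, neg_zero, zero_div, ec_zero, mul_one,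
      Finset.prod_const_one, one_mul]
    have : ∀ t, (∑ j, (α t j : ℂ)) = 1 := by
      intro t
      have := hαsum t
      exact_mod_cast congrArg (fun x : ℝ => (x : ℂ)) this
    simp only [this, one_pow, Finset.prod_const_one]
  -- difference formula
  have hdiff : ((L - 1/(d:ℝ)^m : ℝ) : ℂ)
      = (1/(d:ℂ)^m) * ∑ r ∈ R.erase (fun _ => 0), Φ r := by
    have hsplit : ∑ r ∈ R.erase (fun _ => 0), Φ r + Φ (fun _ => 0) = ∑ r ∈ R, Φ r :=
      Finset.sum_erase_add R Φ hzeromem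
    push_cast
    rw [hLC]
    rw [← hsplit, hΦzero]
    ring
  -- bound each character term
  have habsΦ : ∀ r ∈ R.erase (fun _ => 0), norm (Φ r)
      ≤ ∏ a, Real.exp (-(β * (((min (r a) (d - r a) : ℕ) : ℝ) / d)^2)) := by
    intro r hr
    have hrR : r ∈ R := Finset.mem_of_mem_erase hr
    have hra : ∀ a, r a < d := by
      rw [hR] at hrR
      simp only [Fintype.mem_piFinset, Finset.mem_range] at hrR
      exact hrR
    have hm0 : m ≠ 0 := by omega
    set εsq : Fin m → ℝ := fun a => (((min (r a) (d - r a) : ℕ) : ℝ) / d)^2 with hεsq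
    have hεsq0 : ∀ a, 0 ≤ εsq a := fun a => sq_nonneg _
    set F : Fin q → ℂ := fun t => ∑ j, (α t j : ℂ) * ec (((rr r j : ℕ) : ℝ)/d) with hF
    -- reduce to the product of F's
    have habs1 : norm (Φ r) = ∏ t, (norm (F t))^(idx t) := by
      rw [hΦ]
      rw [norm_mul]
      have h1 : norm (∏ a, ec (-(((r a : ℕ) : ℝ) * (g a : ℝ)) / d)) = 1 := by
        rw [norm_prod]
        simp [abs_ec]
      rw [h1, one_mul, norm_prod]
      simp only [norm_pow]
      rfl
    rw [habs1]
    -- single-character bound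
    have hFta : ∀ (t : Fin q) (a : Fin m),
        norm (F t) ≤ Real.exp (-(c * εsq a)) := by
      intro t a
      have hcb := combo_bound (α t) (hα0 t) (hαsum t)
        (fun j => ec (((rr r j : ℕ) : ℝ)/d))
        (fun j => abs_ec _)
        a.castSucc (Fin.last m) (Fin.castSucc_lt_last a).ne
        (by simp [rr_last, ec_zero])
      simp only [rr_castSucc] at hcb
      have hre : (ec (((r a : ℕ) : ℝ)/d)).re = Real.cos (2 * Real.pi * (((r a : ℕ) : ℝ)/d)) :=
        re_ec _
      have hch := char_bound d (r a) hd (hra a)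
      have hαα : amin^2 ≤ α t a.castSucc * α t (Fin.last m) := by
        have h1 := haminle t a.castSucc
        have h2 := haminle t (Fin.last m)
        nlinarith [hamin0]
      have hcos0 : 0 ≤ 1 - (ec (((r a : ℕ) : ℝ)/d)).re := by
        rw [hre]
        nlinarith [hch, hεsq0 a]
      have hmul : amin^2 * (8 * εsq a)
          ≤ α t a.castSucc * α t (Fin.last m) * (1 - (ec (((r a : ℕ) : ℝ)/d)).re) := by
        apply mul_le_mul hαα _ (by positivity) (le_trans (by positivity) hαα)
        rw [hre]
        exact hch
      have hexp : 1 - c * εsq a ≤ Real.exp (-(c * εsq a)) := by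
        have := Real.add_one_le_exp (-(c * εsq a))
        linarith
      calc norm (F t)
          ≤ 1 - α t a.castSucc * α t (Fin.last m) * (1 - (ec (((r a : ℕ) : ℝ)/d)).re) := hcb
        _ ≤ 1 - c * εsq a := by
            rw [hc]
            nlinarith [hmul]
        _ ≤ Real.exp (-(c * εsq a)) := hexp
    -- combine over a and t
    have hFm : ∀ t : Fin q, (norm (F t))^m ≤ ∏ a, Real.exp (-(c * εsq a)) := by
      intro t
      calc (norm (F t))^m = ∏ _a : Fin m, norm (F t) := by
            rw [Finset.prod_const, Finset.card_univ, Fintype.card_fin]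
        _ ≤ ∏ a, Real.exp (-(c * εsq a)) :=
            Finset.prod_le_prod (fun a _ => norm_nonneg _) (fun a _ => hFta t a)
    have hGpos : (0:ℝ) ≤ ∏ a, Real.exp (-(β * εsq a)) :=
      Finset.prod_nonneg (fun a _ => (Real.exp_pos _).le)
    apply le_of_pow_le_pow_left₀ hm0 hGpos
    calc (∏ t, (norm (F t))^(idx t))^m
        = ∏ t, ((norm (F t))^m)^(idx t) := by
          rw [← Finset.prod_pow]
          exact Finset.prod_congr rfl fun t _ => by
            rw [← pow_mul, ← pow_mul, mul_comm]
      _ ≤ ∏ t, (∏ a, Real.exp (-(c * εsq a)))^(idx t) := by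
          apply Finset.prod_le_prod
          · intro t _
            positivity
          · intro t _
            exact pow_le_pow_left₀ (by positivity) (hFm t) _
      _ = (∏ a, Real.exp (-(c * εsq a)))^n := by
          rw [Finset.prod_pow_eq_pow_sum, hsumidx]
      _ = (∏ a, Real.exp (-(β * εsq a)))^m := by
          rw [← Real.exp_sum, ← Real.exp_sum, ← Real.exp_nat_mul, ← Real.exp_nat_mul]
          congr 1
          have hmR : (m:ℝ) ≠ 0 := by
            have : (0:ℝ) < m := by exact_mod_cast hm
            linarith
          rw [Finset.mul_sum, Finset.mul_sum]
          refine Finset.sum_congr rfl fun x _ => ?_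
          rw [hβdef]
          field_simp
  -- the Gaussian sum
  set S : ℝ := ∑ u ∈ Finset.range d,
      Real.exp (-(β * (((min u (d - u) : ℕ) : ℝ) / d)^2)) with hSdef
  have hS1 : 1 ≤ S := by
    have h0 : Real.exp (-(β * (((min 0 (d - 0) : ℕ) : ℝ) / d)^2)) = 1 := by
      norm_num
    rw [hSdef, ← h0]
    exact Finset.single_le_sum (f := fun u => Real.exp (-(β * (((min u (d - u) : ℕ) : ℝ) / d)^2)))
      (fun u _ => (Real.exp_pos _).le) (Finset.mem_range.mpr (by omega))
  have hS0 : 0 ≤ S := by linarith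
  have hSd : S ≤ d := by
    rw [hSdef]
    calc ∑ u ∈ Finset.range d, Real.exp (-(β * (((min u (d - u) : ℕ) : ℝ) / d)^2))
        ≤ ∑ _u ∈ Finset.range d, (1:ℝ) := by
          apply Finset.sum_le_sum
          intro u _
          apply Real.exp_le_one_iff.mpr
          have : 0 ≤ β * (((min u (d - u) : ℕ) : ℝ) / d)^2 := by positivity
          linarith
      _ = d := by simp
  have hSgauss : S ≤ 1 + 4 * (d:ℝ) / Real.sqrt β := gauss_sum d hd β hβ
  -- sum of Gaussian majorants
  have hsum_erase : ∑ r ∈ R.erase (fun _ => 0),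
      (∏ a, Real.exp (-(β * (((min (r a) (d - r a) : ℕ) : ℝ) / d)^2))) = S^m - 1 := by
    have hfull : ∑ r ∈ R,
        (∏ a, Real.exp (-(β * (((min (r a) (d - r a) : ℕ) : ℝ) / d)^2))) = S^m := by
      rw [hR, ← Finset.prod_univ_sum
        (t := fun _ : Fin m => Finset.range d)
        (f := fun (_ : Fin m) (u : ℕ) => Real.exp (-(β * (((min u (d - u) : ℕ) : ℝ) / d)^2)))]
      rw [hSdef.symm]  -- may need adjusting
      rw [Finset.prod_const, Finset.card_univ, Fintype.card_fin]
    have := Finset.sum_erase_add R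
      (fun r => ∏ a, Real.exp (-(β * (((min (r a) (d - r a) : ℕ) : ℝ) / d)^2))) hzeromem
    rw [hfull] at this
    norm_num at this
    simp only [Nat.cast_min] at this ⊢
    linarith
  -- final estimates
  have hd1 : (1:ℝ) ≤ d := by exact_mod_cast hd
  have hsβ : 0 < Real.sqrt β := Real.sqrt_pos.mpr hβ
  have hsn : 0 < Real.sqrt n := Real.sqrt_pos.mpr hn0
  have hmR : (0:ℝ) < m := by exact_mod_cast hm
  have hgeom : S^m - 1 = (∑ i ∈ Finset.range m, S^i) * (S - 1) := (geom_sum_mul S m).symm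
  have hgs : ∑ i ∈ Finset.range m, S^i ≤ (m:ℝ) * (d:ℝ)^(m-1) := by
    calc ∑ i ∈ Finset.range m, S^i ≤ ∑ _i ∈ Finset.range m, (d:ℝ)^(m-1) := by
          apply Finset.sum_le_sum
          intro i hi
          calc S^i ≤ (d:ℝ)^i := pow_le_pow_left₀ hS0 hSd i
            _ ≤ (d:ℝ)^(m-1) := by
                apply pow_le_pow_right₀ hd1
                have := Finset.mem_range.mp hi
                omega
      _ = (m:ℝ) * (d:ℝ)^(m-1) := by
          rw [Finset.sum_const, Finset.card_range]
          simp
  have hdm : (d:ℝ)^m = (d:ℝ)^(m-1) * d := by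
    rw [← pow_succ]
    congr 1
    omega
  have hkey : (1/(d:ℝ)^m) * (S^m - 1) ≤ (m:ℝ) * (S - 1) / d := by
    rw [hgeom]
    have hS1' : (0:ℝ) ≤ S - 1 := by linarith
    calc (1/(d:ℝ)^m) * ((∑ i ∈ Finset.range m, S^i) * (S - 1))
        ≤ (1/(d:ℝ)^m) * (((m:ℝ) * (d:ℝ)^(m-1)) * (S - 1)) := by
          apply mul_le_mul_of_nonneg_left _ (by positivity)
          exact mul_le_mul_of_nonneg_right hgs hS1'
      _ = (m:ℝ) * (S - 1) / d := by
          rw [hdm]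
          field_simp
  have hS4 : S - 1 ≤ 4 * (d:ℝ) / Real.sqrt β := by linarith
  have hKn : 4 * (m:ℝ) / Real.sqrt β = K / Real.sqrt n := by
    have hmc : Real.sqrt β * Real.sqrt ((m:ℝ)/c) = Real.sqrt n := by
      rw [← Real.sqrt_mul hβ.le]
      congr 1
      rw [hβdef]
      field_simp
    rw [hK, div_eq_div_iff hsβ.ne' hsn.ne', ← hmc]
    ring
  have hchain : |L - 1/(d:ℝ)^m| ≤ K / Real.sqrt n := by
    calc |L - 1/(d:ℝ)^m|
        = norm (((L - 1/(d:ℝ)^m : ℝ) : ℂ)) := by rw [Complex.norm_real, Real.norm_eq_abs]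
      _ = norm ((1/(d:ℂ)^m) * ∑ r ∈ R.erase (fun _ => 0), Φ r) := by rw [hdiff]
      _ = (1/(d:ℝ)^m) * norm (∑ r ∈ R.erase (fun _ => 0), Φ r) := by
          rw [norm_mul]
          congr 1
          rw [norm_div, norm_one, norm_pow]
          norm_num
      _ ≤ (1/(d:ℝ)^m) * ∑ r ∈ R.erase (fun _ => 0), norm (Φ r) := by
          apply mul_le_mul_of_nonneg_left _ (by positivity)
          exact norm_sum_le _ _
      _ ≤ (1/(d:ℝ)^m) * ∑ r ∈ R.erase (fun _ => 0),
            (∏ a, Real.exp (-(β * (((min (r a) (d - r a) : ℕ) : ℝ) / d)^2))) := by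
          apply mul_le_mul_of_nonneg_left _ (by positivity)
          exact Finset.sum_le_sum habsΦ
      _ = (1/(d:ℝ)^m) * (S^m - 1) := by rw [hsum_erase]
      _ ≤ (m:ℝ) * (S - 1) / d := hkey
      _ ≤ (m:ℝ) * (4 * (d:ℝ) / Real.sqrt β) / d := by
          apply (div_le_div_iff_of_pos_right hd0).mpr
          exact mul_le_mul_of_nonneg_left hS4 hmR.le
      _ = 4 * (m:ℝ) / Real.sqrt β := by
          field_simp
      _ = K / Real.sqrt n := hKn
  have hlogn : Real.log 2 ≤ Real.log n := by
    apply Real.log_le_log (by norm_num)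
    exact_mod_cast hn
  have hfin : K ≤ (K+1)/Real.log 2 * Real.log n := by
    have h1 : (K+1)/Real.log 2 * Real.log 2 ≤ (K+1)/Real.log 2 * Real.log n := by
      apply mul_le_mul_of_nonneg_left hlogn (by positivity)
    rw [div_mul_cancel₀ _ (ne_of_gt hlog2)] at h1
    linarith
  calc |L - 1/(d:ℝ)^(m+1-1)| = |L - 1/(d:ℝ)^m| := rfl
    _ ≤ K / Real.sqrt n := hchain
    _ ≤ (K+1)/Real.log 2 * Real.log n / Real.sqrt n := by
        exact (div_le_div_iff_of_pos_right hsn).mpr hfin
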